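/- Let y ∈ ℝⁿ, let x_1,…,x_p ∈ ℝⁿ be continuous covariates, and let r : {1,…,n} → {1,…,L} be a categorical covariate with all group counts n_ℓ positive and sample proportions π̂_ℓ = n_ℓ/n. Let H₀ be the orthogonal projection of ℝⁿ onto the subspace spanned by x_2,…,x_p together with the L group indicator vectors of r, and let ê₁ = x_1 − H₀ x_1 be the residual of x_1 after regressing it on these variables. Assume the equal-covariance condition: n_ℓ^{-1} ∑_{i : r(i)=ℓ} x_{i1} ê_{i1} takes the same value for every ℓ = 1,…,L. Consider (a) the main-only model: minimize ∑_i (y_i − α₀ − ∑_j x_{ij} α_j − β_{r(i)})² subject to ∑_ℓ π̂_ℓ β_ℓ = 0; and (b) the cat-modified model in which only x_1 is interacted: minimize ∑_i (y_i − α₀ − ∑_j x_{ij} α_j − β_{r(i)} − γ_{r(i)} x_{i1})² subject to ∑_ℓ π̂_ℓ β_ℓ = 0 and ∑_ℓ π̂_ℓ γ_ℓ = 0. Assume both constrained least-squares problems have unique minimizers. Then the estimated main x_1-effects coincide: α̂₁^M = α̂₁. -/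

import Mathlib

open Finset

private lemma sum_fiber' {n L : ℕ} (r : Fin n → Fin L) (f : Fin n → ℝ) :
    ∑ i : Fin n, f i = ∑ ℓ : Fin L, ∑ i ∈ univ.filter (fun i : Fin n => r i = ℓ), f i :=
  (Finset.sum_fiberwise_of_maps_to (fun i _ => mem_univ (r i)) f).symm

private lemma sum_mul_comp' {n L : ℕ} (r : Fin n → Fin L) (e1 : Fin n → ℝ)
    (hind : ∀ ℓ : Fin L, ∑ i ∈ univ.filter (fun i : Fin n => r i = ℓ), e1 i = 0)
    (g : Fin L → ℝ) : ∑ i : Fin n, e1 i * g (r i) = 0 := by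
  rw [sum_fiber' r]
  apply Finset.sum_eq_zero
  intro ℓ _
  have h1 : ∀ i ∈ univ.filter (fun i : Fin n => r i = ℓ), e1 i * g (r i) = e1 i * g ℓ := by
    intro i hi; rw [(mem_filter.mp hi).2]
  rw [Finset.sum_congr rfl h1, ← Finset.sum_mul, hind ℓ, zero_mul]

private lemma pert_fit' {n q L : ℕ} (x1 e1 : Fin n → ℝ) (xo : Fin q → Fin n → ℝ)
    (r : Fin n → Fin L) (c : Fin q → ℝ) (d : Fin L → ℝ)
    (hdec : ∀ i, x1 i - e1 i = (∑ j, c j * xo j i) + d (r i))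
    (a0 a1 t dbar : ℝ) (ao : Fin q → ℝ) (b : Fin L → ℝ) (i : Fin n) :
    (a0 - t * dbar) + (a1 + t) * x1 i + (∑ j, (ao j - t * c j) * xo j i) +
      (b (r i) - t * d (r i) + t * dbar) =
    (a0 + a1 * x1 i + (∑ j, ao j * xo j i) + b (r i)) + t * e1 i := by
  have hs : ∑ j, (ao j - t * c j) * xo j i
      = (∑ j, ao j * xo j i) - t * ∑ j, c j * xo j i := by
    rw [Finset.mul_sum, ← Finset.sum_sub_distrib]
    exact Finset.sum_congr rfl fun j _ => by ring
  have hd : d (r i) = x1 i - e1 i - ∑ j, c j * xo j i := by linarith [hdec i]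
  rw [hs, hd]; ring

private lemma pert_constraint' {L : ℕ} (π : Fin L → ℝ) (hS : ∑ ℓ, π ℓ = 1)
    (b d : Fin L → ℝ) (t : ℝ) (hb : ∑ ℓ, π ℓ * b ℓ = 0) :
    ∑ ℓ, π ℓ * (b ℓ - t * d ℓ + t * (∑ ℓ', π ℓ' * d ℓ')) = 0 := by
  have h1 : ∀ ℓ, π ℓ * (b ℓ - t * d ℓ + t * (∑ ℓ', π ℓ' * d ℓ'))
      = π ℓ * b ℓ - t * (π ℓ * d ℓ) + (t * (∑ ℓ', π ℓ' * d ℓ')) * π ℓ := fun ℓ => by ring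
  rw [Finset.sum_congr rfl fun ℓ _ => h1 ℓ, Finset.sum_add_distrib, Finset.sum_sub_distrib,
    ← Finset.mul_sum, ← Finset.mul_sum, hb, hS, mul_one]
  ring

private lemma normal_eq' {n q L : ℕ}
    (z x1 e1 : Fin n → ℝ) (xo : Fin q → Fin n → ℝ) (r : Fin n → Fin L)
    (π : Fin L → ℝ) (hS : ∑ ℓ, π ℓ = 1)
    (c : Fin q → ℝ) (d : Fin L → ℝ)
    (hdec : ∀ i, x1 i - e1 i = (∑ j, c j * xo j i) + d (r i))
    (hoxo : ∀ j, ∑ i, e1 i * xo j i = 0)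
    (hind : ∀ ℓ : Fin L, ∑ i ∈ univ.filter (fun i : Fin n => r i = ℓ), e1 i = 0)
    (hE : 0 < ∑ i, e1 i ^ 2)
    (a0 a1 : ℝ) (ao : Fin q → ℝ) (b : Fin L → ℝ)
    (hb : ∑ ℓ, π ℓ * b ℓ = 0)
    (hmin : ∀ (a0' a1' : ℝ) (ao' : Fin q → ℝ) (b' : Fin L → ℝ),
      (∑ ℓ, π ℓ * b' ℓ = 0) →
      ∑ i, (z i - (a0 + a1 * x1 i + (∑ j, ao j * xo j i) + b (r i))) ^ 2 ≤
      ∑ i, (z i - (a0' + a1' * x1 i + (∑ j, ao' j * xo j i) + b' (r i))) ^ 2) :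
    ∑ i, e1 i * z i = a1 * ∑ i, e1 i ^ 2 := by
  set fit : Fin n → ℝ := fun i => a0 + a1 * x1 i + (∑ j, ao j * xo j i) + b (r i) with hfit
  set A : ℝ := ∑ i, e1 i * (z i - fit i) with hA
  set E : ℝ := ∑ i, e1 i ^ 2 with hEdef
  have hE' : E ≠ 0 := ne_of_gt hE
  have hpert : ∀ t : ℝ, 2 * t * A ≤ t ^ 2 * E := by
    intro t
    set dbar : ℝ := ∑ ℓ', π ℓ' * d ℓ' with hdbar
    have hc := pert_constraint' π hS b d t hb
    have h := hmin (a0 - t * dbar) (a1 + t) (fun j => ao j - t * c j)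
      (fun ℓ => b ℓ - t * d ℓ + t * dbar) hc
    have hr : ∑ i, (z i - ((a0 - t * dbar) + (a1 + t) * x1 i +
        (∑ j, (ao j - t * c j) * xo j i) + (b (r i) - t * d (r i) + t * dbar))) ^ 2
        = ∑ i, ((z i - fit i) - t * e1 i) ^ 2 := by
      refine Finset.sum_congr rfl fun i _ => ?_
      rw [pert_fit' x1 e1 xo r c d hdec a0 a1 t dbar ao b i]
      have hfi : fit i = a0 + a1 * x1 i + (∑ j, ao j * xo j i) + b (r i) := rfl
      rw [hfi]; ring
    have hexp : ∑ i, ((z i - fit i) - t * e1 i) ^ 2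
        = (∑ i, (z i - fit i) ^ 2) - 2 * t * A + t ^ 2 * E := by
      have h2 : ∀ i, ((z i - fit i) - t * e1 i) ^ 2
          = (z i - fit i) ^ 2 - 2 * t * (e1 i * (z i - fit i)) + t ^ 2 * e1 i ^ 2 :=
        fun i => by ring
      rw [Finset.sum_congr rfl fun i _ => h2 i, Finset.sum_add_distrib,
        Finset.sum_sub_distrib, ← Finset.mul_sum, ← Finset.mul_sum, hA, hEdef]
    rw [hr, hexp] at h
    linarith
  have hAzero : A = 0 := by
    have h1 := hpert (A / E)
    have hx : (A / E) * E = A := div_mul_cancel₀ A hE'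
    have h3 : (A / E) ^ 2 * E = (A / E) * A := by rw [sq, mul_assoc, hx]
    rw [h3] at h1
    have h4 : (A / E) * A ≤ 0 := by linarith
    have h5 : 0 ≤ (A / E) * A := by
      rw [div_mul_eq_mul_div]; exact div_nonneg (mul_self_nonneg A) hE.le
    rcases mul_eq_zero.mp (le_antisymm h4 h5) with h | h
    · rcases div_eq_zero_iff.mp h with h' | h'
      · exact h'
      · exact absurd h' hE'
    · exact h
  have hsum0 : ∑ i, e1 i = 0 := by
    have h := sum_mul_comp' r e1 hind (fun _ => 1)
    simpa using h
  have hswap : ∀ (w : Fin q → ℝ), ∑ i, e1 i * (∑ j, w j * xo j i) = 0 := by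
    intro w
    have h1 : ∀ i, e1 i * (∑ j, w j * xo j i) = ∑ j, w j * (e1 i * xo j i) := by
      intro i; rw [Finset.mul_sum]; exact Finset.sum_congr rfl fun j _ => by ring
    rw [Finset.sum_congr rfl fun i _ => h1 i, Finset.sum_comm]
    apply Finset.sum_eq_zero
    intro j _
    rw [← Finset.mul_sum, hoxo j, mul_zero]
  have hsplit : ∑ i, e1 i * z i = ∑ i, e1 i * fit i := by
    have h1 : ∀ i, e1 i * z i = e1 i * (z i - fit i) + e1 i * fit i := fun i => by ring
    rw [Finset.sum_congr rfl fun i _ => h1 i, Finset.sum_add_distrib, ← hA, hAzero, zero_add]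
  have hfitexp : ∀ i, e1 i * fit i = a0 * e1 i + a1 * e1 i ^ 2
      + a1 * (e1 i * (∑ j, c j * xo j i)) + a1 * (e1 i * d (r i))
      + e1 i * (∑ j, ao j * xo j i) + e1 i * b (r i) := by
    intro i
    have hx1 : x1 i = e1 i + ((∑ j, c j * xo j i) + d (r i)) := by linarith [hdec i]
    have hfi : fit i = a0 + a1 * x1 i + (∑ j, ao j * xo j i) + b (r i) := rfl
    rw [hfi, hx1]; ring
  rw [hsplit, Finset.sum_congr rfl fun i _ => hfitexp i]
  rw [Finset.sum_add_distrib, Finset.sum_add_distrib, Finset.sum_add_distrib,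
    Finset.sum_add_distrib, Finset.sum_add_distrib]
  have t1 : ∑ i, a0 * e1 i = 0 := by rw [← Finset.mul_sum, hsum0, mul_zero]
  have t2 : ∑ i, a1 * e1 i ^ 2 = a1 * E := by rw [← Finset.mul_sum, hEdef]
  have t3 : ∑ i, a1 * (e1 i * (∑ j, c j * xo j i)) = 0 := by
    rw [← Finset.mul_sum, hswap c, mul_zero]
  have t4 : ∑ i, a1 * (e1 i * d (r i)) = 0 := by
    rw [← Finset.mul_sum, sum_mul_comp' r e1 hind d, mul_zero]
  have t5 : ∑ i, e1 i * (∑ j, ao j * xo j i) = 0 := hswap ao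
  have t6 : ∑ i, e1 i * b (r i) = 0 := sum_mul_comp' r e1 hind b
  rw [t1, t2, t3, t4, t5, t6]
  ring

/-- Theorem 5: invariance of the main `x₁`-effect when only `x₁` is
cat-modified.  `x1` is the interacted continuous covariate, `xo j` (for `j : Fin q`)
are the remaining continuous covariates `x₂,…,x_p`, and `r` is the categorical
covariate.  `e1` is the residual of `x1` after orthogonally projecting onto the span of
the remaining covariates and the group indicators of `r` (characterized by the two
hypotheses `he1span` and `he1orth`).  Under abundance-based constraints and the
equal-covariance condition on the within-group covariances of `x1` and `e1`, the
estimated main `x₁`-effects of the main-only and cat-modified models coincide.  Both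
constrained least-squares problems are assumed to have unique minimizers. -/
theorem abc_single_interaction_slope_invariance
    {n q L : ℕ}
    (y x1 : Fin n → ℝ) (xo : Fin q → Fin n → ℝ) (r : Fin n → Fin L)
    (hcount : ∀ ℓ : Fin L, 0 < (univ.filter (fun i : Fin n => r i = ℓ)).card)
    -- the residual of x₁ after regressing on x₂,…,x_p and the group indicators:
    (e1 : Fin n → ℝ)
    (he1span : (x1 - e1) ∈ Submodule.span ℝ
      (Set.range xo ∪
        Set.range (fun ℓ : Fin L => fun i : Fin n => if r i = ℓ then (1 : ℝ) else 0)))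
    (he1orth : ∀ v ∈
      (Set.range xo ∪
        Set.range (fun ℓ : Fin L => fun i : Fin n => if r i = ℓ then (1 : ℝ) else 0)),
      ∑ i : Fin n, e1 i * v i = 0)
    -- equal-covariance condition: n_ℓ⁻¹ ∑_{i : r i = ℓ} x1 i * e1 i is the same for all ℓ
    (heqcov : ∀ ℓ ℓ' : Fin L,
      (∑ i ∈ univ.filter (fun i : Fin n => r i = ℓ), x1 i * e1 i) /
          ((univ.filter (fun i : Fin n => r i = ℓ)).card : ℝ) =
        (∑ i ∈ univ.filter (fun i : Fin n => r i = ℓ'), x1 i * e1 i) /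
          ((univ.filter (fun i : Fin n => r i = ℓ')).card : ℝ))
    -- main-only estimates
    (α₀M α₁M : ℝ) (αoM : Fin q → ℝ) (βM : Fin L → ℝ)
    -- cat-modified estimates
    (α₀ α₁ : ℝ) (αo : Fin q → ℝ) (β : Fin L → ℝ) (γ : Fin L → ℝ)
    -- ABC for the main-only estimator
    (hM : ∑ ℓ : Fin L,
      (((univ.filter (fun i : Fin n => r i = ℓ)).card : ℝ) / n) * βM ℓ = 0)
    -- the main-only estimator is a constrained least-squares minimizer
    (hMmin : ∀ (a0 a1 : ℝ) (ao : Fin q → ℝ) (b : Fin L → ℝ),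
      (∑ ℓ : Fin L,
        (((univ.filter (fun i : Fin n => r i = ℓ)).card : ℝ) / n) * b ℓ = 0) →
      ∑ i : Fin n, (y i - (α₀M + α₁M * x1 i + (∑ j : Fin q, αoM j * xo j i) +
          βM (r i))) ^ 2 ≤
        ∑ i : Fin n, (y i - (a0 + a1 * x1 i + (∑ j : Fin q, ao j * xo j i) +
          b (r i))) ^ 2)
    -- ... and it is the unique such minimizer
    (hMuniq : ∀ (a0 a1 : ℝ) (ao : Fin q → ℝ) (b : Fin L → ℝ),
      (∑ ℓ : Fin L,
        (((univ.filter (fun i : Fin n => r i = ℓ)).card : ℝ) / n) * b ℓ = 0) →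
      (∑ i : Fin n, (y i - (a0 + a1 * x1 i + (∑ j : Fin q, ao j * xo j i) +
          b (r i))) ^ 2 ≤
        ∑ i : Fin n, (y i - (α₀M + α₁M * x1 i + (∑ j : Fin q, αoM j * xo j i) +
          βM (r i))) ^ 2) →
      a0 = α₀M ∧ a1 = α₁M ∧ ao = αoM ∧ b = βM)
    -- ABCs for the cat-modified estimator
    (hC1 : ∑ ℓ : Fin L,
      (((univ.filter (fun i : Fin n => r i = ℓ)).card : ℝ) / n) * β ℓ = 0)
    (hC2 : ∑ ℓ : Fin L,
      (((univ.filter (fun i : Fin n => r i = ℓ)).card : ℝ) / n) * γ ℓ = 0)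
    -- the cat-modified estimator is a constrained least-squares minimizer
    (hCmin : ∀ (a0 a1 : ℝ) (ao : Fin q → ℝ) (b g : Fin L → ℝ),
      (∑ ℓ : Fin L,
        (((univ.filter (fun i : Fin n => r i = ℓ)).card : ℝ) / n) * b ℓ = 0) →
      (∑ ℓ : Fin L,
        (((univ.filter (fun i : Fin n => r i = ℓ)).card : ℝ) / n) * g ℓ = 0) →
      ∑ i : Fin n, (y i - (α₀ + α₁ * x1 i + (∑ j : Fin q, αo j * xo j i) +
          β (r i) + γ (r i) * x1 i)) ^ 2 ≤
        ∑ i : Fin n, (y i - (a0 + a1 * x1 i + (∑ j : Fin q, ao j * xo j i) +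
          b (r i) + g (r i) * x1 i)) ^ 2)
    -- ... and it is the unique such minimizer
    (hCuniq : ∀ (a0 a1 : ℝ) (ao : Fin q → ℝ) (b g : Fin L → ℝ),
      (∑ ℓ : Fin L,
        (((univ.filter (fun i : Fin n => r i = ℓ)).card : ℝ) / n) * b ℓ = 0) →
      (∑ ℓ : Fin L,
        (((univ.filter (fun i : Fin n => r i = ℓ)).card : ℝ) / n) * g ℓ = 0) →
      (∑ i : Fin n, (y i - (a0 + a1 * x1 i + (∑ j : Fin q, ao j * xo j i) +
          b (r i) + g (r i) * x1 i)) ^ 2 ≤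
        ∑ i : Fin n, (y i - (α₀ + α₁ * x1 i + (∑ j : Fin q, αo j * xo j i) +
          β (r i) + γ (r i) * x1 i)) ^ 2) →
      a0 = α₀ ∧ a1 = α₁ ∧ ao = αo ∧ b = β ∧ g = γ) :
    α₁M = α₁ := by
  classical
  -- Decompose x1 - e1 as a combination of the other covariates and indicators
  rw [Submodule.span_union] at he1span
  obtain ⟨u, hu, v, hv, huv⟩ := Submodule.mem_sup.mp he1span
  obtain ⟨c, hc⟩ := (Submodule.mem_span_range_iff_exists_fun ℝ).mp hu
  obtain ⟨d, hd⟩ := (Submodule.mem_span_range_iff_exists_fun ℝ).mp hv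
  have hdec : ∀ i, x1 i - e1 i = (∑ j, c j * xo j i) + d (r i) := by
    intro i
    have h := congrFun huv i
    simp only [Pi.add_apply, Pi.sub_apply] at h
    have hui : u i = ∑ j, c j * xo j i := by
      rw [← hc]; simp [Finset.sum_apply]
    have hvi : v i = d (r i) := by
      rw [← hd]
      simp [Finset.sum_apply, mul_ite, mul_one, mul_zero, Finset.sum_ite_eq]
    rw [← hui, ← hvi]
    linarith
  have hoxo : ∀ j, ∑ i, e1 i * xo j i = 0 := fun j =>
    he1orth (xo j) ((Set.mem_union _ _ _).mpr (Or.inl ⟨j, rfl⟩))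
  have hind : ∀ ℓ : Fin L, ∑ i ∈ univ.filter (fun i : Fin n => r i = ℓ), e1 i = 0 := by
    intro ℓ
    have h := he1orth _ ((Set.mem_union _ _ _).mpr (Or.inr ⟨ℓ, rfl⟩))
    rw [Finset.sum_filter]
    simpa [mul_ite, mul_one, mul_zero] using h
  rcases Nat.eq_zero_or_pos n with hn | hn
  · -- degenerate case n = 0: the uniqueness hypothesis is contradictory
    subst hn
    obtain ⟨-, h1, -⟩ := hMuniq α₀M (α₁M + 1) αoM βM hM (by simp)
    linarith
  -- main case n > 0
  have hn' : (n : ℝ) ≠ 0 := Nat.cast_ne_zero.mpr hn.ne'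
  have hcard : ∑ ℓ : Fin L, ((univ.filter (fun i : Fin n => r i = ℓ)).card) = n := by
    have h := Finset.card_eq_sum_card_fiberwise
      (f := r) (s := (univ : Finset (Fin n))) (t := univ) (fun x _ => mem_univ _)
    simpa using h.symm
  have hS : ∑ ℓ : Fin L, ((univ.filter (fun i : Fin n => r i = ℓ)).card : ℝ) / n = 1 := by
    rw [← Finset.sum_div]
    have : ∑ ℓ : Fin L, (((univ.filter (fun i : Fin n => r i = ℓ)).card : ℝ)) = (n : ℝ) := by
      exact_mod_cast congrArg (Nat.cast : ℕ → ℝ) hcard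
    rw [this, div_self hn']
  have hEnn : (0:ℝ) ≤ ∑ i, e1 i ^ 2 := Finset.sum_nonneg fun i _ => sq_nonneg _
  rcases eq_or_lt_of_le hEnn with hE0 | hE
  · -- degenerate case e1 = 0: uniqueness again gives a contradiction
    have he0 : ∀ i, e1 i = 0 := by
      intro i
      have h := (Finset.sum_eq_zero_iff_of_nonneg
        (fun i _ => sq_nonneg (e1 i))).mp hE0.symm i (mem_univ i)
      exact pow_eq_zero_iff (two_ne_zero) |>.mp h
    set dbar : ℝ :=
      ∑ ℓ', (((univ.filter (fun i : Fin n => r i = ℓ')).card : ℝ) / n) * d ℓ' with hdbar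
    have hc := pert_constraint'
      (fun ℓ => ((univ.filter (fun i : Fin n => r i = ℓ)).card : ℝ) / n) hS βM d 1 hM
    have hle : ∑ i : Fin n, (y i - ((α₀M - 1 * dbar) + (α₁M + 1) * x1 i +
        (∑ j : Fin q, (αoM j - 1 * c j) * xo j i) +
        (βM (r i) - 1 * d (r i) + 1 * dbar))) ^ 2 ≤
        ∑ i : Fin n, (y i - (α₀M + α₁M * x1 i + (∑ j : Fin q, αoM j * xo j i) +
          βM (r i))) ^ 2 := by
      refine le_of_eq (Finset.sum_congr rfl fun i _ => ?_)
      rw [pert_fit' x1 e1 xo r c d hdec α₀M α₁M 1 dbar αoM βM i, he0 i]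
      ring
    obtain ⟨-, h1, -⟩ := hMuniq (α₀M - 1 * dbar) (α₁M + 1) (fun j => αoM j - 1 * c j)
      (fun ℓ => βM ℓ - 1 * d ℓ + 1 * dbar) hc hle
    linarith
  -- nondegenerate case: 0 < ∑ e1²
  have hMa := normal_eq' y x1 e1 xo r
    (fun ℓ => ((univ.filter (fun i : Fin n => r i = ℓ)).card : ℝ) / n) hS c d hdec hoxo hind
    hE α₀M α₁M αoM βM hM hMmin
  set z' : Fin n → ℝ := fun i => y i - γ (r i) * x1 i with hz'
  have hCmin' : ∀ (a0' a1' : ℝ) (ao' : Fin q → ℝ) (b' : Fin L → ℝ),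
      (∑ ℓ : Fin L,
        (((univ.filter (fun i : Fin n => r i = ℓ)).card : ℝ) / n) * b' ℓ = 0) →
      ∑ i, (z' i - (α₀ + α₁ * x1 i + (∑ j, αo j * xo j i) + β (r i))) ^ 2 ≤
      ∑ i, (z' i - (a0' + a1' * x1 i + (∑ j, ao' j * xo j i) + b' (r i))) ^ 2 := by
    intro a0' a1' ao' b' hb'
    have h := hCmin a0' a1' ao' b' γ hb' hC2
    have hLeq : ∑ i, (z' i - (α₀ + α₁ * x1 i + (∑ j, αo j * xo j i) + β (r i))) ^ 2
        = ∑ i : Fin n, (y i - (α₀ + α₁ * x1 i + (∑ j : Fin q, αo j * xo j i) +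
            β (r i) + γ (r i) * x1 i)) ^ 2 := by
      refine Finset.sum_congr rfl fun i _ => ?_
      have hzi : z' i = y i - γ (r i) * x1 i := rfl
      rw [hzi]; ring
    have hReq : ∑ i, (z' i - (a0' + a1' * x1 i + (∑ j, ao' j * xo j i) + b' (r i))) ^ 2
        = ∑ i : Fin n, (y i - (a0' + a1' * x1 i + (∑ j : Fin q, ao' j * xo j i) +
            b' (r i) + γ (r i) * x1 i)) ^ 2 := by
      refine Finset.sum_congr rfl fun i _ => ?_
      have hzi : z' i = y i - γ (r i) * x1 i := rfl
      rw [hzi]; ring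
    rw [hLeq, hReq]
    exact h
  have hCa := normal_eq' z' x1 e1 xo r
    (fun ℓ => ((univ.filter (fun i : Fin n => r i = ℓ)).card : ℝ) / n) hS c d hdec hoxo hind
    hE α₀ α₁ αo β hC1 hCmin'
  -- the correction term vanishes by equal covariance and the ABC on γ
  have hT : ∑ i, e1 i * (γ (r i) * x1 i) = 0 := by
    have hfib : ∑ i, e1 i * (γ (r i) * x1 i)
        = ∑ ℓ : Fin L, γ ℓ * ∑ i ∈ univ.filter (fun i : Fin n => r i = ℓ), x1 i * e1 i := by
      rw [sum_fiber' r (fun i => e1 i * (γ (r i) * x1 i))]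
      refine Finset.sum_congr rfl fun ℓ _ => ?_
      rw [Finset.mul_sum]
      refine Finset.sum_congr rfl fun i hi => ?_
      rw [(mem_filter.mp hi).2]; ring
    set ℓ0 := r ⟨0, hn⟩ with hℓ0
    set K : ℝ := (∑ i ∈ univ.filter (fun i : Fin n => r i = ℓ0), x1 i * e1 i) /
        ((univ.filter (fun i : Fin n => r i = ℓ0)).card : ℝ) with hK
    have hSl : ∀ ℓ : Fin L, (∑ i ∈ univ.filter (fun i : Fin n => r i = ℓ), x1 i * e1 i)
        = K * ((univ.filter (fun i : Fin n => r i = ℓ)).card : ℝ) := by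
      intro ℓ
      have hnl : (((univ.filter (fun i : Fin n => r i = ℓ)).card : ℝ)) ≠ 0 :=
        Nat.cast_ne_zero.mpr (hcount ℓ).ne'
      have h := heqcov ℓ ℓ0
      rw [← hK] at h
      exact (div_eq_iff hnl).mp h
    have hpt : ∀ ℓ ∈ (univ : Finset (Fin L)),
        γ ℓ * (∑ i ∈ univ.filter (fun i : Fin n => r i = ℓ), x1 i * e1 i)
        = ((((univ.filter (fun i : Fin n => r i = ℓ)).card : ℝ)) / n * γ ℓ) * (K * n) := by
      intro ℓ _
      rw [hSl ℓ]
      rw [show ((((univ.filter (fun i : Fin n => r i = ℓ)).card : ℝ)) / n * γ ℓ) * (K * n)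
          = ((((univ.filter (fun i : Fin n => r i = ℓ)).card : ℝ)) * γ ℓ * K) * ((n : ℝ) / n) by
          ring, div_self hn']
      ring
    rw [hfib, Finset.sum_congr rfl hpt, ← Finset.sum_mul, hC2, zero_mul]
  have hzy : ∑ i, e1 i * z' i = ∑ i, e1 i * y i := by
    have h1 : ∀ i, e1 i * z' i = e1 i * y i - e1 i * (γ (r i) * x1 i) := by
      intro i
      have hzi : z' i = y i - γ (r i) * x1 i := rfl
      rw [hzi]; ring
    rw [Finset.sum_congr rfl fun i _ => h1 i, Finset.sum_sub_distrib, hT, sub_zero]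
  have hfin : α₁M * (∑ i, e1 i ^ 2) = α₁ * (∑ i, e1 i ^ 2) := by
    rw [← hMa, ← hCa, hzy]
  exact mul_right_cancel₀ (ne_of_gt hE) hfin
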